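/- Let m be a positive integer and z a complex number with S_{m−1}(z) = 0 (where S denotes Chebyshev polynomials of the second kind). Let A = [[1,1],[0,1]], B = [[1,0],[2−z,1]]. Then (A⁻¹B)^m(AB⁻¹)^m = I, the identity matrix. -/
import Mathlib


noncomputable def S : ℕ → ℂ → ℂ
  | 0 => fun _ => 1
  | 1 => fun q => q
  | (n + 2) => fun q => q * S (n + 1) q - S n q

lemma pow_formula (z : ℂ) (M : Matrix (Fin 2) (Fin 2) ℂ) (h : M * M = z • M - 1) :
    ∀ n, M ^ (n + 2) = S (n + 1) z • M - S n z • 1 := by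
  intro n
  induction n with
  | zero =>
      show M ^ 2 = S 1 z • M - S 0 z • 1
      rw [pow_two, h]; simp [S]
  | succ k ih =>
      have : M ^ (k + 1 + 2) = M ^ (k + 2) * M := by rw [← pow_succ]
      rw [this, ih, sub_mul, Matrix.smul_mul, Matrix.smul_mul, h, one_mul,
        smul_sub, smul_smul]
      show _ = S (k + 2) z • M - S (k + 1) z • 1
      have hS : S (k + 2) z = z * S (k + 1) z - S k z := by simp [S]
      rw [hS, sub_smul, mul_comm z]
      abel

theorem stmt_18 (m : ℕ) (hm : 0 < m) (z : ℂ) (hz : S (m - 1) z = 0)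
    (A B : Matrix (Fin 2) (Fin 2) ℂ)
    (hA : A = !![1, 1; 0, 1]) (hB : B = !![1, 0; 2 - z, 1]) :
    (A⁻¹ * B) ^ m * (A * B⁻¹) ^ m = 1 := by
  subst hA hB
  have hAinv : (!![1, 1; 0, 1] : Matrix (Fin 2) (Fin 2) ℂ)⁻¹ = !![1, -1; 0, 1] :=
    Matrix.inv_eq_right_inv (by
      ext i j; fin_cases i <;> fin_cases j <;>
        simp [Matrix.mul_apply, Fin.sum_univ_two])
  have hBinv : (!![1, 0; 2 - z, 1] : Matrix (Fin 2) (Fin 2) ℂ)⁻¹ = !![1, 0; z - 2, 1] :=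
    Matrix.inv_eq_right_inv (by
      ext i j; fin_cases i <;> fin_cases j <;>
        simp [Matrix.mul_apply, Fin.sum_univ_two] <;> ring)
  rw [hAinv, hBinv]
  set Q : Matrix (Fin 2) (Fin 2) ℂ := !![1, -1; 0, 1] * !![1, 0; 2 - z, 1] with hQ
  set R : Matrix (Fin 2) (Fin 2) ℂ := !![1, 1; 0, 1] * !![1, 0; z - 2, 1] with hR
  have hQ2 : Q * Q = z • Q - 1 := by
    rw [hQ]; ext i j; fin_cases i <;> fin_cases j <;>
      simp [Matrix.mul_apply, Fin.sum_univ_two, Matrix.one_apply] <;> ring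
  have hR2 : R * R = z • R - 1 := by
    rw [hR]; ext i j; fin_cases i <;> fin_cases j <;>
      simp [Matrix.mul_apply, Fin.sum_univ_two, Matrix.one_apply] <;> ring
  have hdetQ : Q.det = 1 := by
    rw [hQ]; simp [Matrix.det_fin_two]
  -- m = 1 case is impossible since S 0 z = 1
  match m, hm with
  | 1, _ => simp [S] at hz
  | (k + 2), _ =>
    have hz' : S (k + 1) z = 0 := hz
    have hQm : Q ^ (k + 2) = (- S k z) • 1 := by
      rw [pow_formula z Q hQ2 k, hz', zero_smul, zero_sub, neg_smul]
    have hRm : R ^ (k + 2) = (- S k z) • 1 := by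
      rw [pow_formula z R hR2 k, hz', zero_smul, zero_sub, neg_smul]
    have hsq : S k z * S k z = 1 := by
      have h1 : (Q ^ (k + 2)).det = 1 := by
        rw [Matrix.det_pow, hdetQ, one_pow]
      rw [hQm, Matrix.det_smul, Matrix.det_one, mul_one] at h1
      have : (- S k z) ^ (2 : ℕ) = 1 := by
        simpa [Fintype.card_fin] using h1
      linear_combination this
    rw [hQm, hRm, Matrix.smul_mul, one_mul, smul_smul, neg_mul_neg, hsq, one_smul]
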